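/- Let K be a separable complex Hilbert space, let (x_n)_{n∈ℕ} and (y_n)_{n∈ℕ} be orthonormal sequences in K, and let (a_n)_{n∈ℕ} and (b_n)_{n∈ℕ} be nonincreasing sequences of strictly positive real numbers tending to 0. Let A and B be the compact positive operators on K defined by A x = ∑_n a_n ⟨x, x_n⟩ x_n and B x = ∑_n b_n ⟨x, y_n⟩ y_n (so that a_n and b_n are the singular values of A and B). Put H = K ⊕ K. Then the following are equivalent: (i) there exists a linear isometric isomorphism from ker A onto ker B (i.e. dim ker A = dim ker B), and there exist positive real numbers γ₁, γ₂ such that γ₁ b_n ≤ a_n ≤ γ₂ b_n for all n; (ii) the systems (H; K ⊕ 0, graph(A)) and (H; K ⊕ 0, graph(B)) are boundedly isomorphic. -/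

import Mathlib

/- STATEMENT 2: For compact positive operators A = ∑ aₙ xₙ ⊗ xₙ and B = ∑ bₙ yₙ ⊗ yₙ
with orthonormal sequences (xₙ), (yₙ) and nonincreasing positive null sequences (aₙ), (bₙ),
the systems (K ⊕ K; K ⊕ 0, graph A) and (K ⊕ K; K ⊕ 0, graph B) are boundedly isomorphic
iff dim ker A = dim ker B and γ₁ bₙ ≤ aₙ ≤ γ₂ bₙ for some positive constants γ₁, γ₂. -/

noncomputable section Toolkit

open scoped InnerProductSpace

variable {K : Type*} [NormedAddCommGroup K] [InnerProductSpace ℂ K] [CompleteSpace K]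

local notation "⟪" x ", " y "⟫" => @inner ℂ _ _ x y

abbrev lpC : Type := lp (fun _ : ℕ => ℂ) 2
abbrev lpC' : Type := lp (fun _ : ℕ => ℂ) 2

lemma lp2_summable (f : lpC) : Summable (fun n => ‖f n‖ ^ 2) := by
  have h := (lp.memℓp f).summable (p := 2) (by norm_num)
  refine h.congr fun n => ?_
  norm_num [Real.rpow_natCast]

lemma memℓp_two {f : ℕ → ℂ} (h : Summable fun n => ‖f n‖ ^ 2) : Memℓp f 2 := by
  refine memℓp_gen ?_
  refine h.congr fun n => ?_
  norm_num [Real.rpow_natCast]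

lemma lp2_norm_sq (f : lpC) : ‖f‖ ^ 2 = ∑' n, ‖f n‖ ^ 2 := by
  have h := lp.norm_rpow_eq_tsum (p := 2) (by norm_num) f
  have h2 : ((2 : ENNReal).toReal) = (2 : ℝ) := by norm_num
  rw [h2] at h
  calc ‖f‖ ^ 2 = ‖f‖ ^ (2 : ℝ) := by norm_num [Real.rpow_natCast]
  _ = ∑' n, ‖f n‖ ^ (2 : ℝ) := h
  _ = ∑' n, ‖f n‖ ^ 2 := by refine tsum_congr fun n => ?_; norm_num [Real.rpow_natCast]

lemma tsum_le_tsum {f g : ℕ → ℝ} (h : ∀ n, f n ≤ g n) (hf : Summable f) (hg : Summable g) :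
    ∑' n, f n ≤ ∑' n, g n := hf.tsum_le_tsum h hg

variable {v : ℕ → K}

/-- Synthesis operator. -/
def Phi (hv : Orthonormal ℂ v) : lpC →ₗᵢ[ℂ] K := hv.orthogonalFamily.linearIsometry

lemma Phi_apply (hv : Orthonormal ℂ v) (f : lpC) : Phi hv f = ∑' n, (f n) • v n := by
  simp [Phi, OrthogonalFamily.linearIsometry_apply, LinearIsometry.toSpanSingleton_apply]

def PhiL (hv : Orthonormal ℂ v) : lpC →L[ℂ] K := (Phi hv).toContinuousLinearMap

lemma PhiL_apply (hv : Orthonormal ℂ v) (f : lpC) : PhiL hv f = ∑' n, (f n) • v n :=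
  Phi_apply hv f

lemma norm_PhiL (hv : Orthonormal ℂ v) (f : lpC) : ‖PhiL hv f‖ = ‖f‖ := (Phi hv).norm_map f

def Coef (hv : Orthonormal ℂ v) : K →L[ℂ] lpC := ContinuousLinearMap.adjoint (PhiL hv)

lemma Phi_single (hv : Orthonormal ℂ v) (n : ℕ) : Phi hv (lp.single 2 n (1 : ℂ)) = v n := by
  classical
  have := hv.orthogonalFamily.linearIsometry_apply_single (i := n) (1 : ℂ)
  simpa [Phi, LinearIsometry.toSpanSingleton_apply] using this

lemma coef_apply (hv : Orthonormal ℂ v) (x : K) (n : ℕ) : (Coef hv x) n = ⟪v n, x⟫ := by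
  classical
  have h1 : (Coef hv x) n = ⟪lp.single 2 n (1 : ℂ), Coef hv x⟫ := by
    rw [lp.inner_single_left]; simp
  rw [h1, Coef, ContinuousLinearMap.adjoint_inner_right]
  congr 1
  exact Phi_single hv n

lemma coef_PhiL (hv : Orthonormal ℂ v) (f : lpC) : Coef hv (PhiL hv f) = f := by
  apply lp.ext
  funext n
  rw [coef_apply]
  calc ⟪v n, PhiL hv f⟫ = ⟪Phi hv (lp.single 2 n (1:ℂ)), Phi hv f⟫ := by rw [Phi_single]; rfl
  _ = ⟪lp.single 2 n (1:ℂ), f⟫ := (Phi hv).inner_map_map _ _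
  _ = f n := by rw [lp.inner_single_left]; simp

lemma norm_coef_le (hv : Orthonormal ℂ v) (x : K) : ‖Coef hv x‖ ≤ ‖x‖ := by
  have h2 : ‖Coef hv x‖ ^ 2 = ⟪Coef hv x, Coef hv x⟫.re := by
    rw [← inner_self_eq_norm_sq (𝕜 := ℂ)]; rfl
  have h3 : ⟪Coef hv x, Coef hv x⟫ = ⟪x, PhiL hv (Coef hv x)⟫ := by
    rw [Coef, ContinuousLinearMap.adjoint_inner_left]
  have h4 : ‖Coef hv x‖ ^ 2 ≤ ‖Coef hv x‖ * ‖x‖ := by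
    rw [h2, h3]
    calc ⟪x, PhiL hv (Coef hv x)⟫.re ≤ ‖⟪x, PhiL hv (Coef hv x)⟫‖ := Complex.re_le_norm _
    _ ≤ ‖x‖ * ‖PhiL hv (Coef hv x)‖ := norm_inner_le_norm _ _
    _ = ‖Coef hv x‖ * ‖x‖ := by rw [norm_PhiL]; ring
  nlinarith [norm_nonneg (Coef hv x), norm_nonneg x]


section Diag

variable (c : ℕ → ℝ) {M : ℝ} (hM : ∀ n, |c n| ≤ M)

include hM in
lemma diag_mem (f : lpC) : Memℓp (fun n => (c n : ℂ) * f n) 2 := by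
  apply memℓp_two
  refine Summable.of_nonneg_of_le (fun n => by positivity)
    (fun n => ?_) ((lp2_summable f).mul_left (M ^ 2))
  have : ‖(c n : ℂ) * f n‖ = |c n| * ‖f n‖ := by
    rw [norm_mul, Complex.norm_real]; rfl
  rw [this, mul_pow]
  have h1 : |c n| ^ 2 ≤ M ^ 2 := by nlinarith [hM n, abs_nonneg (c n)]
  exact mul_le_mul_of_nonneg_right h1 (by positivity)

/-- Diagonal multiplication operator on `ℓ²`. -/
def diagL : lpC →L[ℂ] lpC := by
  refine LinearMap.mkContinuous
    { toFun := fun f => ⟨fun n => (c n : ℂ) * f n, diag_mem c hM f⟩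
      map_add' := fun f g => by apply lp.ext; funext n; simp [mul_add]; rfl
      map_smul' := fun r f => by apply lp.ext; funext n; simp [lp.coeFn_smul]; ring } M (fun f => ?_)
  have hM0 : 0 ≤ M := le_trans (abs_nonneg _) (hM 0)
  apply lp.norm_le_of_tsum_le (by norm_num) (by positivity)
  have h2 : ((2:ENNReal).toReal) = (2:ℝ) := by norm_num
  rw [h2]
  have hsum : ∀ g : lpC, ∀ n : ℕ, ‖g n‖ ^ (2:ℝ) = ‖g n‖ ^ 2 := by
    intro g n; norm_num [Real.rpow_natCast]
  calc ∑' n, ‖(⟨fun n => (c n : ℂ) * f n, diag_mem c hM f⟩ : lpC) n‖ ^ (2:ℝ)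
      = ∑' n, ‖(c n : ℂ) * f n‖ ^ 2 := by
        refine tsum_congr fun n => ?_; norm_num [Real.rpow_natCast]
    _ ≤ ∑' n, M ^ 2 * ‖f n‖ ^ 2 := by
        refine tsum_le_tsum (fun n => ?_) ?_ ((lp2_summable f).mul_left _)
        · have heq : ‖(c n : ℂ) * f n‖ = |c n| * ‖f n‖ := by rw [norm_mul, Complex.norm_real]; rfl
          rw [heq, mul_pow]
          have h1 : |c n| ^ 2 ≤ M ^ 2 := by nlinarith [hM n, abs_nonneg (c n)]
          exact mul_le_mul_of_nonneg_right h1 (by positivity)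
        · refine Summable.of_nonneg_of_le (fun n => by positivity) (fun n => ?_)
            ((lp2_summable f).mul_left (M ^ 2))
          have heq : ‖(c n : ℂ) * f n‖ = |c n| * ‖f n‖ := by rw [norm_mul, Complex.norm_real]; rfl
          rw [heq, mul_pow]
          have h1 : |c n| ^ 2 ≤ M ^ 2 := by nlinarith [hM n, abs_nonneg (c n)]
          exact mul_le_mul_of_nonneg_right h1 (by positivity)
    _ = M ^ 2 * ∑' n, ‖f n‖ ^ 2 := by rw [tsum_mul_left]
    _ = (M * ‖f‖) ^ (2:ℝ) := by
        rw [← lp2_norm_sq f]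
        norm_num [Real.rpow_natCast]; ring

lemma diagL_apply (f : lpC) (n : ℕ) : (diagL c hM f) n = (c n : ℂ) * f n := rfl

end Diag

section OpD

variable {v : ℕ → K} (hv : Orthonormal ℂ v) (c : ℕ → ℝ) {M : ℝ} (hM : ∀ n, |c n| ≤ M)

/-- The operator `x ↦ ∑ cₙ ⟪vₙ, x⟫ vₙ`. -/
def opD : K →L[ℂ] K := PhiL hv ∘L diagL c hM ∘L Coef hv

lemma opD_apply (x : K) : opD hv c hM x = ∑' n, ((c n : ℂ) * ⟪v n, x⟫) • v n := by
  rw [opD, ContinuousLinearMap.comp_apply, ContinuousLinearMap.comp_apply, PhiL_apply]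
  refine tsum_congr fun n => ?_
  rw [diagL_apply, coef_apply]

lemma coef_opD (x : K) (n : ℕ) : (Coef hv (opD hv c hM x)) n = (c n : ℂ) * ⟪v n, x⟫ := by
  rw [opD, ContinuousLinearMap.comp_apply, ContinuousLinearMap.comp_apply, coef_PhiL,
    diagL_apply, coef_apply]

end OpD

section Recon

variable {v : ℕ → K} (hv : Orthonormal ℂ v)

/-- Closed span of the range of `v`. -/
abbrev Sv (v : ℕ → K) : Submodule ℂ K := (Submodule.span ℂ (Set.range v)).topologicalClosure

instance Sv_complete (v : ℕ → K) : CompleteSpace (Sv v) :=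
  (Submodule.isClosed_topologicalClosure _).completeSpace_coe

lemma v_mem_Sv (n : ℕ) : v n ∈ Sv v :=
  (Submodule.span ℂ (Set.range v)).le_topologicalClosure
    (Submodule.subset_span (Set.mem_range_self n))

lemma PhiL_mem_Sv (f : lpC) : PhiL hv f ∈ Sv v := by
  have hmem : PhiL hv f ∈ LinearMap.range hv.orthogonalFamily.linearIsometry.toLinearMap :=
    ⟨f, rfl⟩
  rw [hv.orthogonalFamily.range_linearIsometry] at hmem
  refine Submodule.topologicalClosure_mono ?_ hmem
  refine iSup_le fun n => ?_
  rintro z ⟨g, rfl⟩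
  simp only [LinearIsometry.coe_toLinearMap, LinearIsometry.toSpanSingleton_apply]
  exact Submodule.smul_mem _ _ (Submodule.subset_span (Set.mem_range_self n))

lemma inner_eq_zero_of_forall (z : K) (h : ∀ n, ⟪v n, z⟫ = 0) :
    ∀ u ∈ Sv v, ⟪u, z⟫ = 0 := by
  intro u hu
  have hker : Sv v ≤ LinearMap.ker ((innerSL ℂ z : K →L[ℂ] ℂ) : K →ₗ[ℂ] ℂ) := by
    refine Submodule.topologicalClosure_minimal _ ?_ (ContinuousLinearMap.isClosed_ker _)
    rw [Submodule.span_le]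
    rintro _ ⟨n, rfl⟩
    simp only [SetLike.mem_coe, LinearMap.mem_ker, ContinuousLinearMap.coe_coe, innerSL_apply_apply]
    rw [← inner_conj_symm, h n, map_zero]
  have : ⟪z, u⟫ = 0 := hker hu
  rw [← inner_conj_symm, this, map_zero]

lemma mem_Sv_orth_iff (z : K) : z ∈ (Sv v)ᗮ ↔ ∀ n, ⟪v n, z⟫ = 0 := by
  constructor
  · intro hz n
    exact Submodule.inner_right_of_mem_orthogonal (v_mem_Sv n) hz
  · intro h
    rw [Submodule.mem_orthogonal]
    exact inner_eq_zero_of_forall z h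

lemma coef_eq_zero_of_mem_orth {z : K} (hz : z ∈ (Sv v)ᗮ) : Coef hv z = 0 := by
  apply lp.ext; funext n
  rw [coef_apply]
  have := (mem_Sv_orth_iff z).1 hz n
  simpa using this

lemma recon_eq (x : K) : PhiL hv (Coef hv x) = (Submodule.orthogonalProjectionOnto (Sv v) x : K) := by
  symm
  refine Submodule.eq_starProjection_of_mem_of_inner_eq_zero (PhiL_mem_Sv hv _) ?_
  intro w hw
  have h : ∀ n, ⟪v n, x - PhiL hv (Coef hv x)⟫ = 0 := by
    intro n
    rw [inner_sub_right]
    have : ⟪v n, PhiL hv (Coef hv x)⟫ = (Coef hv (PhiL hv (Coef hv x))) n := (coef_apply hv _ n).symm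
    rw [this, coef_PhiL, coef_apply]
    ring
  have h2 := inner_eq_zero_of_forall (v := v) _ h w hw
  rwa [← inner_conj_symm, map_eq_zero_iff _ (starRingEnd ℂ).injective] at h2

lemma recon_of_mem {x : K} (hx : x ∈ Sv v) : PhiL hv (Coef hv x) = x := by
  rw [recon_eq]
  exact Submodule.starProjection_eq_self_iff.mpr hx

lemma decomp (x : K) : x = (Submodule.orthogonalProjectionOnto ((Sv v)ᗮ) x : K) + PhiL hv (Coef hv x) := by
  rw [recon_eq]
  rw [add_comm]
  exact (Submodule.starProjection_add_starProjection_orthogonal (K := Sv v) x).symm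

lemma proj_orth_PhiL (f : lpC) : Submodule.orthogonalProjectionOnto ((Sv v)ᗮ) (PhiL hv f) = 0 :=
  Submodule.orthogonalProjectionOnto_apply_of_mem_orthogonal
    (Submodule.le_orthogonal_orthogonal _ (PhiL_mem_Sv hv f))

end Recon

section Compare

variable {v : ℕ → K} (hv : Orthonormal ℂ v) (c : ℕ → ℝ) {M : ℝ} (hM : ∀ n, |c n| ≤ M)

lemma norm_opD_sq (x : K) :
    ‖opD hv c hM x‖ ^ 2 = ∑' n, ‖(c n : ℂ) * ⟪v n, x⟫‖ ^ 2 := by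
  rw [opD, ContinuousLinearMap.comp_apply, ContinuousLinearMap.comp_apply, norm_PhiL, lp2_norm_sq]
  refine tsum_congr fun n => ?_
  rw [diagL_apply, coef_apply]

lemma norm_coef_sq (x : K) : ‖Coef hv x‖ ^ 2 = ∑' n, ‖⟪v n, x⟫‖ ^ 2 := by
  rw [lp2_norm_sq]
  refine tsum_congr fun n => ?_
  rw [coef_apply]

lemma sv_compare {v w : ℕ → K} (hv : Orthonormal ℂ v) (hw : Orthonormal ℂ w)
    (a b : ℕ → ℝ) {Ma Mb : ℝ} (hMa : ∀ n, |a n| ≤ Ma) (hMb : ∀ n, |b n| ≤ Mb)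
    (ha_anti : Antitone a) (hb_anti : Antitone b)
    (ha_nonneg : ∀ n, 0 ≤ a n) (hb_nonneg : ∀ n, 0 ≤ b n)
    (S T : K →L[ℂ] K)
    (hid : ∀ z, opD hw b hMb z = S (opD hv a hMa (T z))) (n : ℕ) :
    b n ≤ ‖S‖ * ‖T‖ * a n := by
  classical
  -- find a nonzero u in span of w₀..wₙ with ⟪v i, T u⟫ = 0 for i < n
  set Msp : Submodule ℂ K := Submodule.span ℂ (Set.range (fun i : Fin (n+1) => w (i : ℕ))) with hMsp
  have hLI : LinearIndependent ℂ (fun i : Fin (n+1) => w (i : ℕ)) :=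
    hw.linearIndependent.comp (fun i : Fin (n+1) => (i : ℕ)) Fin.val_injective
  have hrank : Module.finrank ℂ Msp = n + 1 := by
    rw [hMsp, finrank_span_eq_card hLI, Fintype.card_fin]
  let φ : Msp →ₗ[ℂ] (Fin n → ℂ) :=
    LinearMap.pi (fun i : Fin n => (((innerSL ℂ (v (i : ℕ))).comp T).toLinearMap).comp Msp.subtype)
  have hni : ¬ Function.Injective φ := by
    intro h
    have h2 := LinearMap.finrank_le_finrank_of_injective h
    rw [hrank, Module.finrank_pi] at h2
    simp at h2
  obtain ⟨u₁, u₂, hfe, hne⟩ := Function.not_injective_iff.1 hni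
  set u : K := (u₁ : K) - (u₂ : K) with hu
  have huM : u ∈ Msp := sub_mem u₁.2 u₂.2
  have hu0 : u ≠ 0 := by
    intro h
    exact hne (Subtype.ext (sub_eq_zero.mp h))
  have hvlt : ∀ m, m < n → ⟪v m, T u⟫ = 0 := by
    intro m hm
    have h1 : φ u₁ ⟨m, hm⟩ = φ u₂ ⟨m, hm⟩ := by rw [hfe]
    simp only [φ, LinearMap.pi_apply, LinearMap.comp_apply, ContinuousLinearMap.coe_coe,
      ContinuousLinearMap.comp_apply, innerSL_apply_apply, Submodule.subtype_apply] at h1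
    rw [hu, map_sub, inner_sub_right, h1, sub_self]
  have hwgt : ∀ m, n < m → ⟪w m, u⟫ = 0 := by
    intro m hm
    refine Submodule.span_induction ?_ ?_ ?_ ?_ huM
    · rintro _ ⟨i, rfl⟩
      exact hw.2 (show m ≠ (i : ℕ) by omega)
    · exact inner_zero_right _
    · intro z₁ z₂ _ _ h₁ h₂; rw [inner_add_right, h₁, h₂, add_zero]
    · intro r z _ h₁; rw [inner_smul_right, h₁, mul_zero]
  have huSw : u ∈ Sv w := by
    refine (Submodule.span ℂ (Set.range w)).le_topologicalClosure ?_
    refine Submodule.span_le.mpr ?_ huM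
    rintro _ ⟨i, rfl⟩
    exact Submodule.subset_span (Set.mem_range_self _)
  -- norm of u via coefficients
  have hnu : ‖Coef hw u‖ = ‖u‖ := by
    conv_rhs => rw [← recon_of_mem hw huSw]
    rw [norm_PhiL]
  -- lower bound for ‖B u‖
  have hlow : b n * ‖u‖ ≤ ‖opD hw b hMb u‖ := by
    have hsq : (b n * ‖u‖) ^ 2 ≤ ‖opD hw b hMb u‖ ^ 2 := by
      rw [norm_opD_sq, mul_pow, ← hnu, norm_coef_sq, ← tsum_mul_left]
      refine tsum_le_tsum (fun m => ?_) ?_ ?_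
      · rcases le_or_gt m n with hmn | hmn
        · have h1 : b n ≤ b m := hb_anti hmn
          have h2 : ‖(b m : ℂ) * ⟪w m, u⟫‖ = b m * ‖⟪w m, u⟫‖ := by
            rw [norm_mul, Complex.norm_real, Real.norm_eq_abs, abs_of_nonneg (hb_nonneg m)]
          rw [h2, mul_pow]
          have h6 : b n ^ 2 ≤ b m ^ 2 := by nlinarith [hb_nonneg n]
          exact mul_le_mul_of_nonneg_right h6 (by positivity)
        · rw [hwgt m hmn]
          simp
      · exact Summable.mul_left _ ((lp2_summable (Coef hw u)).congr
          (fun m => by rw [coef_apply]))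
      · have := lp2_summable (diagL b hMb (Coef hw u))
        refine this.congr fun m => ?_
        rw [diagL_apply, coef_apply]
    have h3 := Real.sqrt_le_sqrt hsq
    rwa [Real.sqrt_sq (mul_nonneg (hb_nonneg n) (norm_nonneg u)), Real.sqrt_sq (norm_nonneg _)] at h3
  -- upper bound for ‖A (T u)‖
  have hup : ‖opD hv a hMa (T u)‖ ≤ a n * ‖T u‖ := by
    have hsq : ‖opD hv a hMa (T u)‖ ^ 2 ≤ (a n * ‖T u‖) ^ 2 := by
      rw [norm_opD_sq, mul_pow]
      have step1 : ∑' m, ‖(a m : ℂ) * ⟪v m, T u⟫‖ ^ 2 ≤ ∑' m, (a n)^2 * ‖⟪v m, T u⟫‖ ^ 2 := by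
        refine tsum_le_tsum (fun m => ?_) ?_ ?_
        · rcases lt_or_ge m n with hmn | hmn
          · rw [hvlt m hmn]
            simp
          · have h1 : a m ≤ a n := ha_anti hmn
            have h2 : ‖(a m : ℂ) * ⟪v m, T u⟫‖ = a m * ‖⟪v m, T u⟫‖ := by
              rw [norm_mul, Complex.norm_real, Real.norm_eq_abs, abs_of_nonneg (ha_nonneg m)]
            rw [h2, mul_pow]
            have h6 : a m ^ 2 ≤ a n ^ 2 := by nlinarith [ha_nonneg m]
            exact mul_le_mul_of_nonneg_right h6 (by positivity)
        · have := lp2_summable (diagL a hMa (Coef hv (T u)))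
          refine this.congr fun m => ?_
          rw [diagL_apply, coef_apply]
        · exact Summable.mul_left _ ((lp2_summable (Coef hv (T u))).congr
            (fun m => by rw [coef_apply]))
      have step2 : ∑' m, (a n)^2 * ‖⟪v m, T u⟫‖ ^ 2 ≤ (a n)^2 * ‖T u‖^2 := by
        rw [tsum_mul_left]
        have h4 : ‖Coef hv (T u)‖ ≤ ‖T u‖ := norm_coef_le hv (T u)
        have h5 : ∑' m, ‖⟪v m, T u⟫‖ ^ 2 = ‖Coef hv (T u)‖ ^ 2 := (norm_coef_sq hv _).symm
        rw [h5]
        have h6 : ‖Coef hv (T u)‖ ^ 2 ≤ ‖T u‖ ^ 2 := by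
          nlinarith [norm_nonneg (Coef hv (T u)), norm_nonneg (T u)]
        exact mul_le_mul_of_nonneg_left h6 (by positivity)
      exact le_trans step1 step2
    have h3 := Real.sqrt_le_sqrt hsq
    rwa [Real.sqrt_sq (norm_nonneg _), Real.sqrt_sq (mul_nonneg (ha_nonneg n) (norm_nonneg (T u)))] at h3
  -- combine
  have hcomb : b n * ‖u‖ ≤ (‖S‖ * ‖T‖ * a n) * ‖u‖ := by
    calc b n * ‖u‖ ≤ ‖opD hw b hMb u‖ := hlow
    _ = ‖S (opD hv a hMa (T u))‖ := by rw [hid u]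
    _ ≤ ‖S‖ * ‖opD hv a hMa (T u)‖ := S.le_opNorm _
    _ ≤ ‖S‖ * (a n * ‖T u‖) := mul_le_mul_of_nonneg_left hup (norm_nonneg S)
    _ ≤ ‖S‖ * (a n * (‖T‖ * ‖u‖)) := by
        refine mul_le_mul_of_nonneg_left ?_ (norm_nonneg S)
        exact mul_le_mul_of_nonneg_left (T.le_opNorm u) (ha_nonneg n)
    _ = (‖S‖ * ‖T‖ * a n) * ‖u‖ := by ring
  have hupos : 0 < ‖u‖ := norm_pos_iff.mpr hu0
  exact le_of_mul_le_mul_right hcomb hupos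

end Compare

section Classify

variable {E : Type*} [NormedAddCommGroup E] [InnerProductSpace ℂ E]

lemma countable_index_of_orthonormal [TopologicalSpace.SeparableSpace E]
    {ι : Type*} {f : ι → E} (hf : Orthonormal ℂ f) : Countable ι := by
  obtain ⟨s, hsc, hsd⟩ := TopologicalSpace.exists_countable_dense E
  haveI := hsc.to_subtype
  have hex : ∀ i : ι, ∃ p : s, dist (f i) (p : E) < 1/2 := by
    intro i
    obtain ⟨p, hps, hdp⟩ := Metric.mem_closure_iff.1 (hsd (f i)) (1/2) (by norm_num)
    exact ⟨⟨p, hps⟩, hdp⟩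
  choose g hg using hex
  have hginj : Function.Injective g := by
    intro i j hij
    by_contra hne
    have h2 : ‖f i - f j‖ ^ 2 = 2 := by
      rw [@norm_sub_sq ℂ]
      simp [hf.1 i, hf.1 j, hf.2 hne]; norm_num
    have h3 : dist (f i) (f j) < 1 := by
      calc dist (f i) (f j) ≤ dist (f i) (g i : E) + dist (g j : E) (f j) := by
            rw [hij]; exact dist_triangle _ _ _
      _ < 1/2 + 1/2 := by
            have := hg i
            have := hg j
            rw [dist_comm (g j : E) (f j)]
            linarith
      _ = 1 := by norm_num
    rw [dist_eq_norm] at h3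
    nlinarith [norm_nonneg (f i - f j)]
  exact Function.Injective.countable hginj

lemma exists_l2_repr [CompleteSpace E] [TopologicalSpace.SeparableSpace E]
    (hinf : ¬ FiniteDimensional ℂ E) :
    Nonempty (E ≃ₗᵢ[ℂ] lpC') := by
  obtain ⟨w, b, hb⟩ := exists_hilbertBasis ℂ E
  have hbo : Orthonormal ℂ ((↑) : w → E) := hb ▸ b.orthonormal
  haveI hcw : Countable w := countable_index_of_orthonormal hbo
  haveI hiw : Infinite w := by
    rw [Set.infinite_coe_iff]
    intro hfin
    haveI := hfin.fintype
    exact hinf (Module.Finite.of_basis b.toOrthonormalBasis.toBasis)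
  obtain ⟨d⟩ := nonempty_denumerable w
  let e : ℕ ≃ w := (Denumerable.eqv w).symm
  have honb : Orthonormal ℂ (fun n : ℕ => ((e n : w) : E)) := hbo.comp e e.injective
  have hrange : Set.range (fun n : ℕ => ((e n : w) : E)) = w := by
    have : Set.range (fun n : ℕ => ((e n : w) : E)) = Subtype.val '' Set.range e := by
      rw [← Set.range_comp]; rfl
    rw [this, Equiv.range_eq_univ, Set.image_univ, Subtype.range_coe]
  have htot : ⊤ ≤ (Submodule.span ℂ (Set.range (fun n : ℕ => ((e n : w) : E)))).topologicalClosure := by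
    rw [hrange]
    have := b.dense_span
    rw [hb, Subtype.range_coe] at this
    rw [this]
  exact ⟨(HilbertBasis.mk honb htot).repr⟩

lemma iso_of_linear_equiv {F : Type*} [NormedAddCommGroup F] [InnerProductSpace ℂ F]
    [CompleteSpace E] [CompleteSpace F]
    [TopologicalSpace.SeparableSpace E] [TopologicalSpace.SeparableSpace F]
    (e : E ≃ₗ[ℂ] F) : Nonempty (E ≃ₗᵢ[ℂ] F) := by
  by_cases hfin : FiniteDimensional ℂ E
  · haveI : FiniteDimensional ℂ F := Module.Finite.equiv e
    have hrk : Module.finrank ℂ E = Module.finrank ℂ F := e.finrank_eq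
    exact ⟨((stdOrthonormalBasis ℂ E).reindex (finCongr hrk)).repr.trans
      (stdOrthonormalBasis ℂ F).repr.symm⟩
  · have hfinF : ¬ FiniteDimensional ℂ F := by
      intro h
      exact hfin (Module.Finite.equiv e.symm)
    obtain ⟨r1⟩ := exists_l2_repr (E := E) hfin
    obtain ⟨r2⟩ := exists_l2_repr (E := F) hfinF
    exact ⟨r1.trans r2.symm⟩

end Classify

end Toolkit

noncomputable section

set_option maxHeartbeats 2000000 in
open ContinuousLinearMap in
theorem graphs_of_compact_positive_operators_boundedly_isomorphic_iff
    {K : Type*} [NormedAddCommGroup K] [InnerProductSpace ℂ K] [CompleteSpace K]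
    [TopologicalSpace.SeparableSpace K]
    (xseq yseq : ℕ → K) (hx : Orthonormal ℂ xseq) (hy : Orthonormal ℂ yseq)
    (a b : ℕ → ℝ)
    (ha_anti : Antitone a) (hb_anti : Antitone b)
    (ha_pos : ∀ n, 0 < a n) (hb_pos : ∀ n, 0 < b n)
    (ha_lim : Filter.Tendsto a Filter.atTop (nhds 0))
    (hb_lim : Filter.Tendsto b Filter.atTop (nhds 0))
    (A B : K →L[ℂ] K)
    (hA : ∀ x : K, A x = ∑' n : ℕ, ((a n : ℂ) * (inner ℂ (xseq n) x : ℂ)) • xseq n)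
    (hB : ∀ x : K, B x = ∑' n : ℕ, ((b n : ℂ) * (inner ℂ (yseq n) x : ℂ)) • yseq n) :
    ((Nonempty ((LinearMap.ker (A : K →ₗ[ℂ] K)) ≃ₗᵢ[ℂ] (LinearMap.ker (B : K →ₗ[ℂ] K)))) ∧
      ∃ γ₁ γ₂ : ℝ, 0 < γ₁ ∧ 0 < γ₂ ∧ ∀ n, γ₁ * b n ≤ a n ∧ a n ≤ γ₂ * b n)
    ↔ (∃ V : (K × K) ≃L[ℂ] (K × K),
        V '' (((⊤ : Submodule ℂ K).prod (⊥ : Submodule ℂ K)) : Set (K × K)) =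
          (((⊤ : Submodule ℂ K).prod (⊥ : Submodule ℂ K)) : Set (K × K)) ∧
        V '' ((LinearMap.graph (A : K →ₗ[ℂ] K)) : Set (K × K)) =
          ((LinearMap.graph (B : K →ₗ[ℂ] K)) : Set (K × K))) := by
  classical
  have ha0 : ∀ n, |a n| ≤ a 0 := fun n => by
    rw [abs_of_nonneg (ha_pos n).le]; exact ha_anti (Nat.zero_le n)
  have hb0 : ∀ n, |b n| ≤ b 0 := fun n => by
    rw [abs_of_nonneg (hb_pos n).le]; exact hb_anti (Nat.zero_le n)
  have hAop : ∀ z, A z = opD hx a ha0 z := fun z => by rw [hA, opD_apply]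
  have hBop : ∀ z, B z = opD hy b hb0 z := fun z => by rw [hB, opD_apply]
  have hkerop : ∀ {v : ℕ → K} (hv : Orthonormal ℂ v) (c : ℕ → ℝ) {M : ℝ}
      (hM : ∀ n, |c n| ≤ M) (hc : ∀ n, c n ≠ 0) (z : K),
      opD hv c hM z = 0 ↔ z ∈ (Sv v)ᗮ := by
    intro v hv c M hM hc z
    rw [mem_Sv_orth_iff]
    constructor
    · intro h n
      have h1 : (Coef hv (opD hv c hM z)) n = 0 := by rw [h, map_zero]; rfl
      rw [coef_opD] at h1
      rcases mul_eq_zero.1 h1 with h2 | h2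
      · exact absurd (Complex.ofReal_eq_zero.1 h2) (hc n)
      · exact h2
    · intro h
      rw [opD_apply]
      have : ∀ n : ℕ, ((c n : ℂ) * (inner ℂ (v n) z : ℂ)) • v n = 0 := by
        intro n; rw [h n, mul_zero, zero_smul]
      simp only [this, tsum_zero]
  have hkA : LinearMap.ker (A : K →ₗ[ℂ] K) = (Sv xseq)ᗮ := by
    ext z
    rw [LinearMap.mem_ker, ← hkerop hx a ha0 (fun n => (ha_pos n).ne') z]
    constructor
    · intro h; rw [← hAop z]; exact h
    · intro h
      have h2 : A z = 0 := by rw [hAop]; exact h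
      exact h2
  have hkB : LinearMap.ker (B : K →ₗ[ℂ] K) = (Sv yseq)ᗮ := by
    ext z
    rw [LinearMap.mem_ker, ← hkerop hy b hb0 (fun n => (hb_pos n).ne') z]
    constructor
    · intro h; rw [← hBop z]; exact h
    · intro h
      have h2 : B z = 0 := by rw [hBop]; exact h
      exact h2
  constructor
  · rintro ⟨⟨U0⟩, γ₁, γ₂, hγ₁, hγ₂, hγ⟩
    obtain ⟨U⟩ : Nonempty ((Sv xseq)ᗮ ≃ₗᵢ[ℂ] (Sv yseq)ᗮ) := by
      rw [← hkA, ← hkB]; exact ⟨U0⟩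
    set P₁ : K →L[ℂ] ((Sv xseq)ᗮ) := Submodule.orthogonalProjectionOnto ((Sv xseq)ᗮ) with hP₁
    set P₂ : K →L[ℂ] ((Sv yseq)ᗮ) := Submodule.orthogonalProjectionOnto ((Sv yseq)ᗮ) with hP₂
    set UL : ((Sv xseq)ᗮ) →L[ℂ] ((Sv yseq)ᗮ) := U.toLinearIsometry.toContinuousLinearMap
    set UL' : ((Sv yseq)ᗮ) →L[ℂ] ((Sv xseq)ᗮ) := U.symm.toLinearIsometry.toContinuousLinearMap
    set W : K →L[ℂ] K :=
      ((Sv yseq)ᗮ).subtypeL ∘L UL ∘L P₁ + PhiL hy ∘L Coef hx with hW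
    set W' : K →L[ℂ] K :=
      ((Sv xseq)ᗮ).subtypeL ∘L UL' ∘L P₂ + PhiL hx ∘L Coef hy with hW'
    have hWz : ∀ z, W z = ((UL (P₁ z) : K)) + PhiL hy (Coef hx z) := fun z => rfl
    have hW'z : ∀ z, W' z = ((UL' (P₂ z) : K)) + PhiL hx (Coef hy z) := fun z => rfl
    -- ratio sequences
    have hrb : ∀ n, |a n / b n| ≤ γ₂ := by
      intro n
      rw [abs_of_nonneg (div_nonneg (ha_pos n).le (hb_pos n).le), div_le_iff₀ (hb_pos n)]
      exact (hγ n).2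
    have hrb' : ∀ n, |b n / a n| ≤ 1 / γ₁ := by
      intro n
      rw [abs_of_nonneg (div_nonneg (hb_pos n).le (ha_pos n).le),
        div_le_div_iff₀ (ha_pos n) hγ₁]
      have := (hγ n).1; nlinarith
    set D : K →L[ℂ] K :=
      ((Sv yseq)ᗮ).subtypeL ∘L P₂ + opD hy (fun n => a n / b n) hrb with hD
    set D' : K →L[ℂ] K :=
      ((Sv yseq)ᗮ).subtypeL ∘L P₂ + opD hy (fun n => b n / a n) hrb' with hD'
    have hDz : ∀ z, D z = ((P₂ z : K)) + opD hy (fun n => a n / b n) hrb z := fun z => rfl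
    have hD'z : ∀ z, D' z = ((P₂ z : K)) + opD hy (fun n => b n / a n) hrb' z := fun z => rfl
    -- micro lemmas
    have copD : ∀ {v : ℕ → K} (hv : Orthonormal ℂ v) (c : ℕ → ℝ) {M : ℝ}
        (hM : ∀ n, |c n| ≤ M) (z : K),
        Coef hv (opD hv c hM z) = diagL c hM (Coef hv z) := by
      intro v hv c M hM z
      rw [opD, ContinuousLinearMap.comp_apply, ContinuousLinearMap.comp_apply, coef_PhiL]
    have popD : ∀ (c : ℕ → ℝ) {M : ℝ} (hM : ∀ n, |c n| ≤ M) (z : K),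
        P₂ (opD hy c hM z) = 0 := by
      intro c M hM z
      rw [opD, ContinuousLinearMap.comp_apply, ContinuousLinearMap.comp_apply, hP₂]
      exact proj_orth_PhiL hy _
    have cy_orth : ∀ (z : ((Sv yseq)ᗮ)), Coef hy (z : K) = 0 :=
      fun z => coef_eq_zero_of_mem_orth hy z.2
    have cx_orth : ∀ (z : ((Sv xseq)ᗮ)), Coef hx (z : K) = 0 :=
      fun z => coef_eq_zero_of_mem_orth hx z.2
    have py_self : ∀ (z : ((Sv yseq)ᗮ)), P₂ (z : K) = z := fun z => by
      rw [hP₂]; exact Submodule.orthogonalProjectionOnto_mem_subspace_eq_self z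
    have px_self : ∀ (z : ((Sv xseq)ᗮ)), P₁ (z : K) = z := fun z => by
      rw [hP₁]; exact Submodule.orthogonalProjectionOnto_mem_subspace_eq_self z
    have py_phi : ∀ f, P₂ (PhiL hy f) = 0 := fun f => by rw [hP₂]; exact proj_orth_PhiL hy f
    have px_phi : ∀ f, P₁ (PhiL hx f) = 0 := fun f => by rw [hP₁]; exact proj_orth_PhiL hx f
    have hdecx : ∀ z : K, ((P₁ z : K)) + PhiL hx (Coef hx z) = z := fun z => (decomp hx z).symm
    have hdecy : ∀ z : K, ((P₂ z : K)) + PhiL hy (Coef hy z) = z := fun z => (decomp hy z).symm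
    -- inverse identities for W
    have hW'W : ∀ z, W' (W z) = z := by
      intro z
      have h1 : P₂ (W z) = UL (P₁ z) := by
        rw [hWz, map_add, py_self, py_phi, add_zero]
      have h2 : Coef hy (W z) = Coef hx z := by
        rw [hWz, map_add, cy_orth, coef_PhiL, zero_add]
      rw [hW'z, h1, h2]
      have h3 : UL' (UL (P₁ z)) = P₁ z := U.symm_apply_apply _
      rw [h3]
      exact hdecx z
    have hWW' : ∀ z, W (W' z) = z := by
      intro z
      have h1 : P₁ (W' z) = UL' (P₂ z) := by
        rw [hW'z, map_add, px_self, px_phi, add_zero]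
      have h2 : Coef hx (W' z) = Coef hy z := by
        rw [hW'z, map_add, cx_orth, coef_PhiL, zero_add]
      rw [hWz, h1, h2]
      have h3 : UL (UL' (P₂ z)) = P₂ z := U.apply_symm_apply _
      rw [h3]
      exact hdecy z
    -- inverse identities for D
    have hdiag_cancel : ∀ (c c' : ℕ → ℝ) {M M' : ℝ} (hM : ∀ n, |c n| ≤ M)
        (hM' : ∀ n, |c' n| ≤ M') (hcc : ∀ n, c' n * c n = 1) (g : lpC),
        diagL c' hM' (diagL c hM g) = g := by
      intro c c' M M' hM hM' hcc g
      apply lp.ext; funext n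
      rw [diagL_apply, diagL_apply, ← mul_assoc, ← Complex.ofReal_mul, hcc n,
        Complex.ofReal_one, one_mul]
    have hD'D : ∀ z, D' (D z) = z := by
      intro z
      have h1 : P₂ (D z) = P₂ z := by
        rw [hDz, map_add, py_self, popD, add_zero]
      have h2 : Coef hy (D z) = diagL (fun n => a n / b n) hrb (Coef hy z) := by
        rw [hDz, map_add, cy_orth, copD, zero_add]
      have hcc1 : ∀ n, (b n / a n) * (a n / b n) = 1 := by
        intro n
        have han := (ha_pos n).ne'
        have hbn := (hb_pos n).ne'
        field_simp
      rw [hD'z, h1, opD, ContinuousLinearMap.comp_apply, ContinuousLinearMap.comp_apply, h2,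
        hdiag_cancel (fun n => a n / b n) (fun n => b n / a n) hrb hrb' hcc1]
      exact hdecy z
    have hDD' : ∀ z, D (D' z) = z := by
      intro z
      have h1 : P₂ (D' z) = P₂ z := by
        rw [hD'z, map_add, py_self, popD, add_zero]
      have h2 : Coef hy (D' z) = diagL (fun n => b n / a n) hrb' (Coef hy z) := by
        rw [hD'z, map_add, cy_orth, copD, zero_add]
      have hcc2 : ∀ n, (a n / b n) * (b n / a n) = 1 := by
        intro n
        have han := (ha_pos n).ne'
        have hbn := (hb_pos n).ne'
        field_simp
      rw [hDz, h1, opD, ContinuousLinearMap.comp_apply, ContinuousLinearMap.comp_apply, h2,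
        hdiag_cancel (fun n => b n / a n) (fun n => a n / b n) hrb' hrb hcc2]
      exact hdecy z
    -- key identity
    have hkey : ∀ z, B (D (W z)) = W (A z) := by
      intro z
      have h2 : Coef hy (W z) = Coef hx z := by
        rw [hWz, map_add, cy_orth, coef_PhiL, zero_add]
      have h3 : Coef hy (D (W z)) = diagL (fun n => a n / b n) hrb (Coef hx z) := by
        rw [hDz, map_add, cy_orth, copD, zero_add, h2]
      have hlhs : B (D (W z)) =
          PhiL hy (diagL b hb0 (diagL (fun n => a n / b n) hrb (Coef hx z))) := by
        rw [hBop, opD, ContinuousLinearMap.comp_apply, ContinuousLinearMap.comp_apply, h3]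
      have hba : diagL b hb0 (diagL (fun n => a n / b n) hrb (Coef hx z)) =
          diagL a ha0 (Coef hx z) := by
        apply lp.ext; funext n
        rw [diagL_apply, diagL_apply, diagL_apply, ← mul_assoc, ← Complex.ofReal_mul]
        congr 2
        have hbn := (hb_pos n).ne'
        field_simp
      have hrhs : W (A z) = PhiL hy (diagL a ha0 (Coef hx z)) := by
        rw [hAop, opD, ContinuousLinearMap.comp_apply, ContinuousLinearMap.comp_apply, hWz]
        rw [px_phi, coef_PhiL]
        simp
      rw [hlhs, hba, hrhs]
    -- build V
    set Weq : K ≃L[ℂ] K := ContinuousLinearEquiv.equivOfInverse W W' hW'W hWW' with hWeq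
    set Deq : K ≃L[ℂ] K := ContinuousLinearEquiv.equivOfInverse D D' hD'D hDD' with hDeq
    refine ⟨(Weq.trans Deq).prodCongr Weq, ?_, ?_⟩
    · ext p
      constructor
      · rintro ⟨⟨u, w⟩, hm, rfl⟩
        simp only [SetLike.mem_coe, Submodule.mem_prod, Submodule.mem_top, Submodule.mem_bot,
          true_and] at hm ⊢
        simp [hm, ContinuousLinearEquiv.prodCongr_apply]
      · intro hp
        simp only [SetLike.mem_coe, Submodule.mem_prod, Submodule.mem_top, Submodule.mem_bot,
          true_and] at hp
        refine ⟨(W' (D' p.1), 0), ?_, ?_⟩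
        · simp [Submodule.mem_prod]
        · have : D (W (W' (D' p.1))) = p.1 := by rw [hWW', hDD']
          ext
          · exact this
          · simp [ContinuousLinearEquiv.prodCongr_apply, hp]
      all_goals try rfl
    · ext p
      constructor
      · rintro ⟨⟨u, w⟩, hm, rfl⟩
        simp only [SetLike.mem_coe, LinearMap.mem_graph_iff, ContinuousLinearMap.coe_coe] at hm ⊢
        simp only [ContinuousLinearEquiv.prodCongr_apply, ContinuousLinearEquiv.trans_apply]
        have hcoe : ∀ z, Weq z = W z := fun z => rfl
        have hcoe2 : ∀ z, Deq z = D z := fun z => rfl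
        rw [hcoe, hcoe2, hcoe, hm]
        exact (hkey u).symm
      · intro hp
        simp only [SetLike.mem_coe, LinearMap.mem_graph_iff, ContinuousLinearMap.coe_coe] at hp
        refine ⟨(W' (D' p.1), A (W' (D' p.1))), ?_, ?_⟩
        · simp [LinearMap.mem_graph_iff]
        · have h1 : D (W (W' (D' p.1))) = p.1 := by rw [hWW', hDD']
          have h2 : W (A (W' (D' p.1))) = B (D (W (W' (D' p.1)))) := (hkey _).symm
          ext
          · exact h1
          · simp only [ContinuousLinearEquiv.prodCongr_apply, ContinuousLinearEquiv.trans_apply]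
            have hcoe : ∀ z, Weq z = W z := fun z => rfl
            have hcoe2 : ∀ z, Deq z = D z := fun z => rfl
            rw [hcoe, h2, h1, hp]
  · rintro ⟨V, himg1, himg2⟩
    have hmem1 : ∀ x : K, ((x, (0:K)) : K × K) ∈
        ((((⊤ : Submodule ℂ K).prod ⊥) : Submodule ℂ (K × K)) : Set (K × K)) := by
      intro x
      simp [Submodule.mem_prod]
    have h1 : ∀ x : K, (V (x, 0)).2 = 0 := by
      intro x
      have hm : V (x, 0) ∈ ((((⊤ : Submodule ℂ K).prod ⊥) : Submodule ℂ (K × K)) : Set (K × K)) := by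
        rw [← himg1]; exact ⟨(x, 0), hmem1 x, rfl⟩
      rw [SetLike.mem_coe, Submodule.mem_prod] at hm
      exact (Submodule.mem_bot ℂ).1 hm.2
    have h1' : ∀ x : K, (V.symm (x, 0)).2 = 0 := by
      intro x
      have hm : ((x, (0:K)) : K × K) ∈ ⇑V '' ((((⊤ : Submodule ℂ K).prod ⊥) :
          Submodule ℂ (K × K)) : Set (K × K)) := by
        rw [himg1]; exact hmem1 x
      obtain ⟨p, hp, hVp⟩ := hm
      have hps : V.symm (x, 0) = p := by rw [← hVp, V.symm_apply_apply]
      rw [hps]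
      rw [SetLike.mem_coe, Submodule.mem_prod] at hp
      exact (Submodule.mem_bot ℂ).1 hp.2
    have hgr : ∀ x : K, V (x, A x) ∈ ((LinearMap.graph (B : K →ₗ[ℂ] K)) : Set (K × K)) := by
      intro x
      rw [← himg2]
      exact ⟨(x, A x), by simp [LinearMap.mem_graph_iff], rfl⟩
    set T : K →L[ℂ] K := (ContinuousLinearMap.fst ℂ K K) ∘L
      (V : (K × K) →L[ℂ] (K × K)) ∘L ((ContinuousLinearMap.id ℂ K).prod A) with hT
    have hTx : ∀ x, T x = (V (x, A x)).1 := fun x => rfl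
    have hVx : ∀ x, V (x, A x) = (T x, B (T x)) := by
      intro x
      have h := hgr x
      rw [SetLike.mem_coe, LinearMap.mem_graph_iff] at h
      have : (V (x, A x)).2 = B (T x) := by rw [h]; rfl
      exact Prod.ext rfl this
    set S : K →L[ℂ] K := (ContinuousLinearMap.snd ℂ K K) ∘L
      (V : (K × K) →L[ℂ] (K × K)) ∘L (ContinuousLinearMap.inr ℂ K K) with hS
    have hSy : ∀ y, S y = (V (0, y)).2 := fun y => rfl
    set S' : K →L[ℂ] K := (ContinuousLinearMap.snd ℂ K K) ∘L
      (V.symm : (K × K) →L[ℂ] (K × K)) ∘L (ContinuousLinearMap.inr ℂ K K) with hS'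
    have hS'y : ∀ y, S' y = (V.symm (0, y)).2 := fun y => rfl
    have hBS : ∀ x, B (T x) = S (A x) := by
      intro x
      have hsplit : ((x, A x) : K × K) = (x, 0) + (0, A x) := by simp
      have h2 : (V (x, A x)).2 = (V (x, 0)).2 + (V (0, A x)).2 := by
        rw [hsplit, map_add]; rfl
      rw [hVx x] at h2
      simpa [h1 x, hSy] using h2
    have hS'S : ∀ y, S' (S y) = y := by
      intro y
      rw [hS'y]
      have hsplit : ((0, S y) : K × K) = V (0, y) - (((V (0, y)).1, 0) : K × K) := by
        ext
        · simp
        · simp [hSy]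
      rw [hsplit, map_sub, V.symm_apply_apply]
      have := h1' (V (0, y)).1
      show ((0:K), y).2 - (V.symm ((V (0, y)).1, 0)).2 = y
      rw [this]; simp
    have hSS' : ∀ y, S (S' y) = y := by
      intro y
      rw [hSy]
      have hsplit : ((0, S' y) : K × K) = V.symm (0, y) - (((V.symm (0, y)).1, 0) : K × K) := by
        ext
        · simp
        · simp [hS'y]
      rw [hsplit, map_sub, V.apply_symm_apply]
      have := h1 (V.symm (0, y)).1
      show ((0:K), y).2 - (V ((V.symm (0, y)).1, 0)).2 = y
      rw [this]; simp
    have hSinj : ∀ y, S y = 0 → y = 0 := fun y hy => by rw [← hS'S y, hy, map_zero]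
    -- T is bijective
    have hTinj : LinearMap.ker (T : K →ₗ[ℂ] K) = ⊥ := by
      apply LinearMap.ker_eq_bot'.mpr
      intro x hxT
      have hxT2 : T x = 0 := hxT
      have h3 : V (x, A x) = 0 := by
        rw [hVx x, hxT2, map_zero]
        rfl
      have h4 : ((x, A x) : K × K) = 0 := by
        have := congrArg V.symm h3
        rwa [V.symm_apply_apply, map_zero] at this
      exact congrArg Prod.fst h4
    have hTsurj : LinearMap.range (T : K →ₗ[ℂ] K) = ⊤ := by
      rw [LinearMap.range_eq_top]
      intro z
      have hm : ((z, B z) : K × K) ∈ ((LinearMap.graph (B : K →ₗ[ℂ] K)) : Set (K × K)) := by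
        simp [LinearMap.mem_graph_iff]
      rw [← himg2] at hm
      obtain ⟨p, hp, hVp⟩ := hm
      rw [SetLike.mem_coe, LinearMap.mem_graph_iff] at hp
      refine ⟨p.1, ?_⟩
      have hpp : (p.1, A p.1) = p := by
        ext
        · rfl
        · exact hp.symm
      have : V (p.1, A p.1) = (z, B z) := by rw [hpp, hVp]
      have h5 := congrArg Prod.fst this
      rw [ContinuousLinearMap.coe_coe, hTx p.1]
      exact h5
    set Te : K ≃L[ℂ] K := ContinuousLinearEquiv.ofBijective T hTinj hTsurj with hTe
    have hTec : ∀ z, Te z = T z := fun z => rfl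
    have hTes : ∀ z, T (Te.symm z) = z := by
      intro z
      rw [← hTec, Te.apply_symm_apply]
    have hidAB : ∀ z, opD hy b hb0 z =
        S ((opD hx a ha0) ((Te.symm : K →L[ℂ] K) z)) := by
      intro z
      have h6 : B (T (Te.symm z)) = S (A (Te.symm z)) := hBS _
      rw [hTes] at h6
      rw [← hBop, ← hAop]
      exact h6
    have hidBA : ∀ z, opD hx a ha0 z =
        S' ((opD hy b hb0) ((Te : K →L[ℂ] K) z)) := by
      intro z
      have h6 : B (T z) = S (A z) := hBS z
      have h7 : S' (B (T z)) = S' (S (A z)) := by rw [h6]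
      rw [hS'S] at h7
      rw [← hAop, ← hBop]
      have h8 : ((Te : K →L[ℂ] K) z) = T z := rfl
      rw [h8, ← h7]
    have hcmp1 : ∀ n, b n ≤ ‖S‖ * ‖(Te.symm : K →L[ℂ] K)‖ * a n :=
      sv_compare hx hy a b ha0 hb0 ha_anti hb_anti (fun n => (ha_pos n).le)
        (fun n => (hb_pos n).le) S (Te.symm : K →L[ℂ] K) hidAB
    have hcmp2 : ∀ n, a n ≤ ‖S'‖ * ‖(Te : K →L[ℂ] K)‖ * b n :=
      sv_compare hy hx b a hb0 ha0 hb_anti ha_anti (fun n => (hb_pos n).le)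
        (fun n => (ha_pos n).le) S' (Te : K →L[ℂ] K) hidBA
    set c1 := ‖S‖ * ‖(Te.symm : K →L[ℂ] K)‖ with hc1
    set c2 := ‖S'‖ * ‖(Te : K →L[ℂ] K)‖ with hc2
    have hc1nn : 0 ≤ c1 := mul_nonneg (norm_nonneg _) (norm_nonneg _)
    have hc2nn : 0 ≤ c2 := mul_nonneg (norm_nonneg _) (norm_nonneg _)
    constructor
    · -- kernel isometry
      have hmap1 : ∀ x ∈ LinearMap.ker (A : K →ₗ[ℂ] K), ((T : K →ₗ[ℂ] K)) x ∈ LinearMap.ker (B : K →ₗ[ℂ] K) := by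
        intro x hxk
        have hx0 : A x = 0 := hxk
        have : B (T x) = S (A x) := hBS x
        rw [hx0, map_zero] at this
        exact this
      have hmap2 : ∀ z ∈ LinearMap.ker (B : K →ₗ[ℂ] K),
          (((Te.symm : K →L[ℂ] K) : K →ₗ[ℂ] K)) z ∈ LinearMap.ker (A : K →ₗ[ℂ] K) := by
        intro z hzk
        have hz0 : B z = 0 := hzk
        have h6 : B (T (Te.symm z)) = S (A (Te.symm z)) := hBS _
        rw [hTes, hz0] at h6
        exact hSinj _ h6.symm
      let f := ((T : K →ₗ[ℂ] K)).restrict hmap1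
      let g := (((Te.symm : K →L[ℂ] K) : K →ₗ[ℂ] K)).restrict hmap2
      have hfg : f.comp g = LinearMap.id := by
        ext z
        have : T (Te.symm (z : K)) = (z : K) := hTes _
        simpa [f, g, LinearMap.restrict_apply] using this
      have hgf : g.comp f = LinearMap.id := by
        ext z
        have : Te.symm (T (z : K)) = (z : K) := by
          rw [← hTec, Te.symm_apply_apply]
        simpa [f, g, LinearMap.restrict_apply] using this
      let e : (LinearMap.ker (A : K →ₗ[ℂ] K)) ≃ₗ[ℂ] (LinearMap.ker (B : K →ₗ[ℂ] K)) := LinearEquiv.ofLinear f g hfg hgf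
      haveI : CompleteSpace (LinearMap.ker (A : K →ₗ[ℂ] K)) := (ContinuousLinearMap.isClosed_ker A).completeSpace_coe
      haveI : CompleteSpace (LinearMap.ker (B : K →ₗ[ℂ] K)) := (ContinuousLinearMap.isClosed_ker B).completeSpace_coe
      haveI hsc : SecondCountableTopology K := UniformSpace.secondCountable_of_separable K
      haveI : TopologicalSpace.SeparableSpace (LinearMap.ker (A : K →ₗ[ℂ] K)) :=
        TopologicalSpace.SecondCountableTopology.to_separableSpace
      haveI : TopologicalSpace.SeparableSpace (LinearMap.ker (B : K →ₗ[ℂ] K)) :=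
        TopologicalSpace.SecondCountableTopology.to_separableSpace
      exact iso_of_linear_equiv e
    · refine ⟨1 / (c1 + 1), c2 + 1, by positivity, by positivity, fun n => ⟨?_, ?_⟩⟩
      · have hb1 : b n ≤ (c1 + 1) * a n := by
          calc b n ≤ c1 * a n := hcmp1 n
          _ ≤ (c1 + 1) * a n := by nlinarith [(ha_pos n).le]
        rw [div_mul_eq_mul_div, div_le_iff₀ (by positivity)]
        calc 1 * b n = b n := one_mul _
        _ ≤ (c1 + 1) * a n := hb1
        _ = a n * (c1 + 1) := by ring
      · calc a n ≤ c2 * b n := hcmp2 n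
        _ ≤ (c2 + 1) * b n := by nlinarith [(hb_pos n).le]

end
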